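/- Consistency theorem: in the imprecise Monte Carlo setting, if the class ℱ = {f_t : t ∈ T} is a strong Glivenko–Cantelli class for the probability measure P, then the estimator Ê̲_n^𝒫(f) is a strongly consistent estimator of E̲^𝒫(f); that is, there exist minimal measurable covers |Ê̲_n^𝒫(f) − E̲^𝒫(f)|* of |Ê̲_n^𝒫(f) − E̲^𝒫(f)| such that |Ê̲_n^𝒫(f) − E̲^𝒫(f)|* → 0 P^∞-almost surely as n → ∞. -/

import Mathlib

open MeasureTheory Filter Topology ProbabilityTheory
open scoped ENNReal

noncomputable section

/-- The positive part of an extended real number, as an element of `ℝ≥0∞`. -/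
def epos (x : EReal) : ℝ≥0∞ := if x = ⊤ then ⊤ else ENNReal.ofReal x.toReal

/-- The (possibly infinite) expectation `E(g) = ∫ g⁺ − ∫ g⁻` of an extended-real map. -/
def eExp {Ω : Type*} [MeasurableSpace Ω] (μ : Measure Ω) (g : Ω → EReal) : EReal :=
  ((∫⁻ ω, epos (g ω) ∂μ : ℝ≥0∞) : EReal) - ((∫⁻ ω, epos (-(g ω)) ∂μ : ℝ≥0∞) : EReal)

/-- `E(g)` exists: at least one of `E(g⁺)`, `E(g⁻)` is finite. -/
def eExpExists {Ω : Type*} [MeasurableSpace Ω] (μ : Measure Ω) (g : Ω → EReal) : Prop :=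
  (∫⁻ ω, epos (g ω) ∂μ) ≠ ⊤ ∨ (∫⁻ ω, epos (-(g ω)) ∂μ) ≠ ⊤

/-- Outer expectation of an arbitrary extended-real map: the infimum of `E(g)` over all
measurable `g ≥ h` whose expectation exists. -/
def outerExp {Ω : Type*} [MeasurableSpace Ω] (μ : Measure Ω) (h : Ω → EReal) : EReal :=
  sInf {y : EReal | ∃ g : Ω → EReal,
    Measurable g ∧ (∀ ω, h ω ≤ g ω) ∧ eExpExists μ g ∧ eExp μ g = y}

/-- Inner expectation of an arbitrary extended-real map. -/
def innerExp {Ω : Type*} [MeasurableSpace Ω] (μ : Measure Ω) (h : Ω → EReal) : EReal :=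
  - outerExp μ (fun ω => - h ω)

/-- `g` is a minimal measurable cover of `h` w.r.t. `μ`: it is measurable, dominates `h`
pointwise, and is a.s. below any measurable map dominating `h` pointwise. -/
def IsMinMeasCover {Ω : Type*} [MeasurableSpace Ω] (μ : Measure Ω) (h g : Ω → EReal) : Prop :=
  Measurable g ∧ (∀ ω, h ω ≤ g ω) ∧
    ∀ g' : Ω → EReal, Measurable g' → (∀ ω, h ω ≤ g' ω) → ∀ᵐ ω ∂μ, g ω ≤ g' ω

/-- Absolute value on extended reals. -/
def eabs (x : EReal) : EReal := max x (-x)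


/-! ### Auxiliary material -/

section Aux

noncomputable def psi' : ℝ → ℝ := fun r => r / (1 + |r|)

lemma psi'_strictMono : StrictMono psi' := by
  intro r t hrt
  unfold psi'
  rw [div_lt_div_iff₀ (by positivity) (by positivity)]
  rcases abs_cases r with ⟨h1,h2⟩ | ⟨h1,h2⟩ <;> rcases abs_cases t with ⟨h3,h4⟩ | ⟨h3,h4⟩ <;> nlinarith

lemma psi'_lt_one (r : ℝ) : |psi' r| < 1 := by
  unfold psi'
  rw [abs_div, div_lt_one (by positivity)]
  rw [abs_of_nonneg (by positivity : (0:ℝ) ≤ 1 + |r|)]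
  linarith [abs_nonneg r]

noncomputable def psi : EReal → ℝ := fun x =>
  if x = ⊥ then 0 else if x = ⊤ then 3 else psi' x.toReal + 3/2

lemma psi_nonneg (x : EReal) : 0 ≤ psi x := by
  unfold psi; split_ifs with h1 h2
  · norm_num
  · norm_num
  · linarith [abs_lt.mp (psi'_lt_one x.toReal)|>.1]

lemma psi_le_three (x : EReal) : psi x ≤ 3 := by
  unfold psi; split_ifs with h1 h2
  · norm_num
  · norm_num
  · linarith [abs_lt.mp (psi'_lt_one x.toReal)|>.2]

lemma psi_strictMono : StrictMono psi := by
  intro x y hxy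
  unfold psi
  induction x using EReal.rec with
  | bot =>
    induction y using EReal.rec with
    | bot => exact absurd hxy (lt_irrefl _)
    | coe r => norm_num
               linarith [abs_lt.mp (psi'_lt_one r)|>.1]
    | top => simp
  | coe r =>
    induction y using EReal.rec with
    | bot => exact absurd hxy (by simp)
    | coe s =>
      simp only [if_neg (by simp : ((r:EReal)) ≠ ⊥), if_neg (by simp : ((r:EReal)) ≠ ⊤),
        if_neg (by simp : ((s:EReal)) ≠ ⊥), if_neg (by simp : ((s:EReal)) ≠ ⊤)]
      have : r < s := EReal.coe_lt_coe_iff.mp hxy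
      have := psi'_strictMono (by simpa using this : ((r:EReal)).toReal < ((s:EReal)).toReal)
      linarith
    | top =>
      norm_num
      linarith [abs_lt.mp (psi'_lt_one r)|>.2]
  | top => exact absurd hxy (by simp)

lemma psi_measurable : Measurable psi := by
  unfold psi
  apply Measurable.ite (measurableSet_singleton _) measurable_const
  apply Measurable.ite (measurableSet_singleton _) measurable_const
  exact ((continuous_id.div ((continuous_const.add continuous_abs)) (fun r => (by positivity : (0:ℝ) < 1 + |r|).ne')).measurable).comp measurable_ereal_toReal |>.add measurable_const

noncomputable def phi : EReal → ℝ≥0∞ := fun x => ENNReal.ofReal (psi x)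

lemma phi_strictMono : StrictMono phi := fun x _ hxy =>
  (ENNReal.ofReal_lt_ofReal_iff_of_nonneg (psi_nonneg x)).mpr (psi_strictMono hxy)

lemma phi_mono : Monotone phi := phi_strictMono.monotone

lemma phi_measurable : Measurable phi := ENNReal.measurable_ofReal.comp psi_measurable

lemma phi_le (x : EReal) : phi x ≤ ENNReal.ofReal 3 := ENNReal.ofReal_le_ofReal (psi_le_three x)

/-- Every extended-real-valued map on a finite measure space admits a minimal measurable
cover. -/
theorem exists_minMeasCover {Ω : Type*} [MeasurableSpace Ω] (μ : Measure Ω)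
    [IsFiniteMeasure μ] (h : Ω → EReal) : ∃ H, IsMinMeasCover μ h H := by
  set c : ℝ≥0∞ := ⨅ (g : Ω → EReal) (_ : Measurable g) (_ : ∀ ω, h ω ≤ g ω),
    ∫⁻ ω, phi (g ω) ∂μ with hc
  have hctop : c ≠ ⊤ := by
    have h1 : c ≤ ∫⁻ ω, phi ((fun _ => (⊤ : EReal)) ω) ∂μ := by
      refine iInf_le_of_le _ (iInf_le_of_le measurable_const (iInf_le_of_le (fun ω => le_top) le_rfl))
    have h2 : (∫⁻ ω, phi (⊤ : EReal) ∂μ) ≤ ENNReal.ofReal 3 * μ Set.univ := by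
      rw [← lintegral_const]
      exact lintegral_mono fun ω => phi_le _
    exact ne_top_of_le_ne_top (by finiteness) (h1.trans h2)
  have hsel : ∀ n : ℕ, ∃ g : Ω → EReal, Measurable g ∧ (∀ ω, h ω ≤ g ω) ∧
      (∫⁻ ω, phi (g ω) ∂μ) < c + ((n : ℝ≥0∞) + 1)⁻¹ := by
    intro n
    have hlt : c < c + ((n : ℝ≥0∞) + 1)⁻¹ :=
      ENNReal.lt_add_right hctop (by simp [ENNReal.inv_ne_zero])
    rw [hc] at hlt
    simp only [iInf_lt_iff] at hlt
    obtain ⟨g, hgm, hgh, hg⟩ := hlt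
    exact ⟨g, hgm, hgh, hg⟩
  choose g hgm hgh hglt using hsel
  set H : Ω → EReal := fun ω => ⨅ n, g n ω with hH
  have hHm : Measurable H := Measurable.iInf hgm
  have hHh : ∀ ω, h ω ≤ H ω := fun ω => le_iInf fun n => hgh n ω
  have hcleH : c ≤ ∫⁻ ω, phi (H ω) ∂μ :=
    iInf_le_of_le H (iInf_le_of_le hHm (iInf_le_of_le hHh le_rfl))
  have hHlec : (∫⁻ ω, phi (H ω) ∂μ) ≤ c := by
    refine ENNReal.le_of_forall_pos_le_add fun ε hε hc' => ?_
    obtain ⟨n, hn⟩ := ENNReal.exists_inv_nat_lt (a := (ε : ℝ≥0∞)) (by simpa using hε.ne')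
    have h1 : (∫⁻ ω, phi (H ω) ∂μ) ≤ ∫⁻ ω, phi (g n ω) ∂μ :=
      lintegral_mono fun ω => phi_mono (iInf_le _ n)
    have h2 : ((n : ℝ≥0∞) + 1)⁻¹ ≤ (n : ℝ≥0∞)⁻¹ :=
      ENNReal.inv_le_inv.mpr (le_add_of_nonneg_right zero_le_one)
    calc (∫⁻ ω, phi (H ω) ∂μ) ≤ c + ((n : ℝ≥0∞) + 1)⁻¹ := h1.trans (hglt n).le
      _ ≤ c + ε := by gcongr; exact h2.trans hn.le
  have hHc : (∫⁻ ω, phi (H ω) ∂μ) = c := le_antisymm hHlec hcleH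
  refine ⟨H, hHm, hHh, fun g' hg'm hg'h => ?_⟩
  set K : Ω → EReal := fun ω => min (H ω) (g' ω) with hK
  have hKm : Measurable K := hHm.min hg'm
  have hKh : ∀ ω, h ω ≤ K ω := fun ω => le_min (hHh ω) (hg'h ω)
  have hKle : ∀ ω, phi (K ω) ≤ phi (H ω) := fun ω => phi_mono (min_le_left _ _)
  have hcK : c ≤ ∫⁻ ω, phi (K ω) ∂μ :=
    iInf_le_of_le K (iInf_le_of_le hKm (iInf_le_of_le hKh le_rfl))
  have hKc : (∫⁻ ω, phi (K ω) ∂μ) = c :=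
    le_antisymm ((lintegral_mono fun ω => hKle ω).trans hHc.le) hcK
  have hKmeas : Measurable fun ω => phi (K ω) := phi_measurable.comp hKm
  have hHmeas : Measurable fun ω => phi (H ω) := phi_measurable.comp hHm
  have hsub : (∫⁻ ω, (phi (H ω) - phi (K ω)) ∂μ) = 0 := by
    rw [lintegral_sub hKmeas (by rw [hKc]; exact hctop)
      (Filter.Eventually.of_forall hKle), hHc, hKc, tsub_self]
  have hae : ∀ᵐ ω ∂μ, (fun ω => phi (H ω) - phi (K ω)) ω = 0 :=
    (lintegral_eq_zero_iff (hHmeas.sub hKmeas)).mp hsub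
  filter_upwards [hae] with ω hω
  have h1 : phi (H ω) ≤ phi (K ω) := tsub_eq_zero_iff_le.mp hω
  have heq : phi (H ω) = phi (K ω) := le_antisymm h1 (hKle ω)
  calc H ω = K ω := phi_strictMono.injective heq
    _ ≤ g' ω := min_le_right _ _

lemma eabs_coe (r : ℝ) : eabs ((r : ℝ) : EReal) = ((|r| : ℝ) : EReal) := by
  unfold eabs
  rw [← EReal.coe_neg]
  rw [abs]
  exact (Monotone.map_max (f := fun x : ℝ => (x : EReal)) (fun _ _ h => EReal.coe_le_coe_iff.mpr h)).symm

lemma eabs_nonneg (x : EReal) : 0 ≤ eabs x := by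
  unfold eabs
  rcases le_total x 0 with h | h
  · exact le_max_of_le_right (by rw [← neg_zero]; exact EReal.neg_le_neg_iff.mpr h)
  · exact le_max_of_le_left h

lemma key_ineq {T : Type*} [Nonempty T] (A b : T → ℝ) (B : ℝ) (hb : ∀ t, B ≤ b t) :
    eabs ((⨅ t, ((A t : ℝ) : EReal)) - ⨅ t, ((b t : ℝ) : EReal)) ≤
      ⨆ t, ((|A t - b t| : ℝ) : EReal) := by
  set S : EReal := ⨆ t, ((|A t - b t| : ℝ) : EReal) with hS
  rcases eq_or_ne S ⊤ with hStop | hStop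
  · rw [hStop]; exact le_top
  have t0 : T := Classical.arbitrary T
  have hSbot : S ≠ ⊥ := fun h => by
    have := le_iSup (fun t => ((|A t - b t| : ℝ) : EReal)) t0
    rw [← hS, h] at this; exact absurd (le_bot_iff.mp this) (by simp)
  set s : ℝ := S.toReal with hs
  have hSs : S = (s : EReal) := (EReal.coe_toReal hStop hSbot).symm
  have habs : ∀ t, |A t - b t| ≤ s := fun t =>
    EReal.coe_le_coe_iff.mp (by rw [← hSs]; exact le_iSup (fun t => ((|A t - b t| : ℝ) : EReal)) t)
  set c : EReal := ⨅ t, ((b t : ℝ) : EReal) with hcdef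
  have hcbot : (B : EReal) ≤ c := le_iInf fun t => EReal.coe_le_coe_iff.mpr (hb t)
  have hctop : c ≤ ((b t0 : ℝ) : EReal) := iInf_le _ t0
  obtain ⟨c', hc'⟩ : ∃ r : ℝ, c = (r : EReal) :=
    ⟨c.toReal, (EReal.coe_toReal (fun h => by rw [h] at hctop; exact EReal.coe_ne_top _ (top_le_iff.mp hctop))
      (fun h => by rw [h] at hcbot; exact EReal.coe_ne_bot _ (le_bot_iff.mp hcbot))).symm⟩
  set a : EReal := ⨅ t, ((A t : ℝ) : EReal) with hadef
  have hA_lb : ∀ t, B - s ≤ A t := fun t => by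
    have h1 := habs t
    have h2 := hb t
    cases abs_cases (A t - b t) <;> linarith [(abs_le.mp h1).1]
  have habot : ((B - s : ℝ) : EReal) ≤ a := le_iInf fun t => EReal.coe_le_coe_iff.mpr (hA_lb t)
  have hatop : a ≤ ((A t0 : ℝ) : EReal) := iInf_le _ t0
  obtain ⟨a', ha'⟩ : ∃ r : ℝ, a = (r : EReal) :=
    ⟨a.toReal, (EReal.coe_toReal (fun h => by rw [h] at hatop; exact EReal.coe_ne_top _ (top_le_iff.mp hatop))
      (fun h => by rw [h] at habot; exact EReal.coe_ne_bot _ (le_bot_iff.mp habot))).symm⟩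
  have hale : ∀ t, a' ≤ A t := fun t =>
    EReal.coe_le_coe_iff.mp (by rw [← ha']; exact iInf_le _ t)
  have hcle : ∀ t, c' ≤ b t := fun t =>
    EReal.coe_le_coe_iff.mp (by rw [← hc']; exact iInf_le _ t)
  have h1 : a' - s ≤ c' := by
    have : ((a' - s : ℝ) : EReal) ≤ c := le_iInf fun t => EReal.coe_le_coe_iff.mpr (by
      have := hale t; have := (abs_le.mp (habs t)).2; linarith)
    rw [hc'] at this; exact EReal.coe_le_coe_iff.mp this
  have h2 : c' - s ≤ a' := by
    have : ((c' - s : ℝ) : EReal) ≤ a := le_iInf fun t => EReal.coe_le_coe_iff.mpr (by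
      have := hcle t; have := (abs_le.mp (habs t)).1; linarith)
    rw [ha'] at this; exact EReal.coe_le_coe_iff.mp this
  rw [ha', hc', ← EReal.coe_sub, eabs_coe, hSs]
  exact EReal.coe_le_coe_iff.mpr (abs_le.mpr ⟨by linarith, by linarith⟩)

end Aux

/-- **Consistency.** If the class `ℱ = {f_t : t ∈ T}` is a strong
Glivenko–Cantelli class for `P` (i.e. the minimal measurable covers of the uniform deviations
`sup_{t∈T} |Ê_n(f_t) − E^P(f_t)|` tend to `0` a.s.), then the estimator `Ê̲_n^𝒫(f)` is a
strongly consistent estimator of the lower expectation `E̲^𝒫(f)`: there are minimal measurable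
covers of `|Ê̲_n^𝒫(f) − E̲^𝒫(f)|` converging to `0` `P^∞`-a.s. -/
theorem consistency_of_imprecise_monte_carlo
    {T : Type*} [Nonempty T]
    (Pt : T → Measure ℝ) (hPt : ∀ t, IsProbabilityMeasure (Pt t))
    (P : Measure ℝ) [IsProbabilityMeasure P]
    (f : ℝ → ℝ) (hf : Measurable f)
    (hfint : ∀ t, Integrable f (Pt t))
    (hsup : BddAbove (Set.range fun t => ∫ x, |f x| ∂(Pt t)))
    (ft : T → ℝ → ℝ)
    (hftm : ∀ t, Measurable (ft t)) (hfti : ∀ t, Integrable (ft t) P)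
    (hfte : ∀ t, ∫ x, ft t x ∂P = ∫ x, f x ∂(Pt t))
    (hftea : ∀ t, ∫ x, |ft t x| ∂P = ∫ x, |f x| ∂(Pt t))
    (μ : Measure (ℕ → ℝ)) [IsProbabilityMeasure μ]
    (hmap : ∀ k : ℕ, μ.map (fun ω => ω k) = P)
    (hind : iIndepFun (m := fun _ : ℕ => (inferInstance : MeasurableSpace ℝ))
      (fun k (ω : ℕ → ℝ) => ω k) μ)
    -- `ℱ` is a strong Glivenko–Cantelli class for `P`
    (hGC : ∃ G : ℕ → (ℕ → ℝ) → EReal,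
      (∀ n : ℕ, IsMinMeasCover μ
        (fun ω => ⨆ t : T, ((|(n : ℝ)⁻¹ * ∑ k ∈ Finset.range n, ft t (ω k) -
          ∫ x, ft t x ∂P| : ℝ) : EReal)) (G n)) ∧
      ∀ᵐ ω ∂μ, Tendsto (fun n : ℕ => G n ω) atTop (𝓝 (0 : EReal))) :
    ∃ H : ℕ → (ℕ → ℝ) → EReal,
      (∀ n : ℕ, IsMinMeasCover μ
        (fun ω => eabs ((⨅ t : T, (((n : ℝ)⁻¹ *
            ∑ k ∈ Finset.range n, ft t (ω k) : ℝ) : EReal)) -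
          ⨅ t : T, ((∫ x, f x ∂(Pt t) : ℝ) : EReal))) (H n)) ∧
      ∀ᵐ ω ∂μ, Tendsto (fun n : ℕ => H n ω) atTop (𝓝 (0 : EReal)) := by
  classical
  obtain ⟨G, hGcov, hGtend⟩ := hGC
  obtain ⟨M, hM⟩ := hsup
  have hM' : ∀ t, ∫ x, |f x| ∂(Pt t) ≤ M := fun t => hM (Set.mem_range_self t)
  have hB : ∀ t, -M ≤ ∫ x, ft t x ∂P := by
    intro t
    rw [hfte]
    have h1 : ∫ x, -|f x| ∂(Pt t) ≤ ∫ x, f x ∂(Pt t) :=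
      integral_mono ((hfint t).abs.neg) (hfint t) (fun x => neg_abs_le (f x))
    rw [integral_neg] at h1
    linarith [hM' t]
  -- key pointwise inequality
  have hkey : ∀ (n : ℕ) (ω : ℕ → ℝ),
      eabs ((⨅ t : T, (((n : ℝ)⁻¹ * ∑ k ∈ Finset.range n, ft t (ω k) : ℝ) : EReal)) -
          ⨅ t : T, ((∫ x, f x ∂(Pt t) : ℝ) : EReal)) ≤
        ⨆ t : T, ((|(n : ℝ)⁻¹ * ∑ k ∈ Finset.range n, ft t (ω k) -
          ∫ x, ft t x ∂P| : ℝ) : EReal) := by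
    intro n ω
    have h := key_ineq (fun t => (n : ℝ)⁻¹ * ∑ k ∈ Finset.range n, ft t (ω k))
      (fun t => ∫ x, ft t x ∂P) (-M) hB
    simpa only [hfte] using h
  -- minimal measurable covers of the target maps
  have hcover : ∀ n : ℕ, ∃ H', IsMinMeasCover μ
      (fun ω => eabs ((⨅ t : T, (((n : ℝ)⁻¹ *
          ∑ k ∈ Finset.range n, ft t (ω k) : ℝ) : EReal)) -
        ⨅ t : T, ((∫ x, f x ∂(Pt t) : ℝ) : EReal))) H' :=
    fun n => exists_minMeasCover μ _
  choose H' hH' using hcover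
  refine ⟨fun n ω => min (H' n ω) (G n ω), fun n => ⟨(hH' n).1.min (hGcov n).1, ?_, ?_⟩, ?_⟩
  · exact fun ω => le_min ((hH' n).2.1 ω) ((hkey n ω).trans ((hGcov n).2.1 ω))
  · intro g' hg'm hg'h
    filter_upwards [(hH' n).2.2 g' hg'm hg'h] with ω hω
    exact (min_le_left _ _).trans hω
  · filter_upwards [hGtend] with ω hω
    refine tendsto_of_tendsto_of_tendsto_of_le_of_le (tendsto_const_nhds) hω ?_ ?_
    · intro n
      exact le_trans (eabs_nonneg _) (le_min ((hH' n).2.1 ω) ((hkey n ω).trans ((hGcov n).2.1 ω)))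
    · exact fun n => min_le_right _ _
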